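/- Let H_S ∈ ℂ^{N_r×m} have rank L with compact SVD H_S = U Σ V*, and let H̃_S = [H_S, h] for a column h lying in the column space of U. Writing a = U* h, the L-th largest singular value satisfies 0 ≤ σ_L(H̃_S)² − σ_L(H_S)² ≤ |a_L|². -/

import Mathlib

open Matrix

/-- The `k`-th largest value of a finite real tuple. -/
noncomputable def kthLargest {n : ℕ} (f : Fin n → ℝ) (k : Fin n) : ℝ :=
  f (Tuple.sort f k.rev)

/-- The square of the `k`-th largest singular value of `A`, i.e. the `k`-th largest
eigenvalue of `A Aᴴ`. -/
noncomputable def kthSingularValueSq {m n : ℕ} (A : Matrix (Fin m) (Fin n) ℂ)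
    (k : Fin m) : ℝ :=
  kthLargest (Matrix.isHermitian_mul_conjTranspose_self A).eigenvalues k

open Polynomial Finset


/-- Similar matrices have equal characteristic polynomials. -/
lemma my_charpoly_conj {n : ℕ} (P B Q : Matrix (Fin n) (Fin n) ℂ)
    (hPQ : P * Q = 1) : (P * B * Q).charpoly = B.charpoly := by
  have hQP : Q * P = 1 := mul_eq_one_comm.mp hPQ
  have key : charmatrix (P * B * Q) =
      (P.map C) * charmatrix B * (Q.map C) := by
    have hmapPQ : (P.map C) * (Q.map C) = 1 := by
      rw [← Matrix.map_mul, hPQ, ← Matrix.map_one C (by simp) (by simp)]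
    unfold charmatrix
    rw [Matrix.mul_sub, Matrix.sub_mul]
    congr 1
    · have : (Matrix.scalar (Fin n) (X : ℂ[X])) = (X : ℂ[X]) • 1 := by
        simp [Matrix.scalar_apply, Matrix.smul_one_eq_diagonal]
      rw [this, Matrix.mul_smul, Matrix.smul_mul, mul_one, hmapPQ]
    · simp only [RingHom.mapMatrix_apply]
      rw [← Matrix.map_mul, ← Matrix.map_mul]
  unfold Matrix.charpoly
  rw [key, Matrix.det_mul, Matrix.det_mul]
  have hdet : (P.map C).det * (Q.map C).det = 1 := by
    rw [← Matrix.det_mul, ← Matrix.map_mul, hPQ]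
    simp
  calc (P.map C).det * (charmatrix B).det * (Q.map C).det
      = (charmatrix B).det * ((P.map C).det * (Q.map C).det) := by ring
    _ = (charmatrix B).det := by rw [hdet, mul_one]

lemma my_charpoly_diagonal {n : ℕ} (d : Fin n → ℂ) :
    (Matrix.diagonal d).charpoly = ∏ i, (X - C (d i)) := by
  rw [Matrix.charpoly_of_upperTriangular _ (Matrix.blockTriangular_diagonal d)]
  simp

/-- If two diagonalizations give rise to equal matrices, the diagonal multisets agree. -/
lemma my_multiset_of_charpoly_eq {n : ℕ} (d e : Fin n → ℂ)
    (hch : (Matrix.diagonal d).charpoly = (Matrix.diagonal e).charpoly) :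
    Multiset.map d Finset.univ.val = Multiset.map e Finset.univ.val := by
  rw [my_charpoly_diagonal, my_charpoly_diagonal] at hch
  have hd : (Multiset.map (fun a => X - C a) (Multiset.map d Finset.univ.val)).prod
      = (Multiset.map (fun a => X - C a) (Multiset.map e Finset.univ.val)).prod := by
    rw [Multiset.map_map, Multiset.map_map]
    rw [Finset.prod_eq_multiset_prod, Finset.prod_eq_multiset_prod] at hch
    exact hch
  have := congrArg Polynomial.roots hd
  rwa [Polynomial.roots_multiset_prod_X_sub_C, Polynomial.roots_multiset_prod_X_sub_C] at this

lemma card_le_sort {n : ℕ} (f : Fin n → ℝ) (a : ℝ) :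
    Fintype.card {i : Fin n // f (Tuple.sort f i) ≤ a} = Fintype.card {j : Fin n // f j ≤ a} :=
  Fintype.card_congr (Equiv.subtypeEquiv (Tuple.sort f) fun _ => Iff.rfl)

lemma sort_le_iff {n : ℕ} (f : Fin n → ℝ) (a : ℝ) (t : Fin n) :
    f (Tuple.sort f t) ≤ a ↔ t.1 < Fintype.card {j : Fin n // f j ≤ a} := by
  rw [← card_le_sort f a, Fintype.card_subtype]
  exact (Tuple.lt_card_le_iff_apply_le_of_monotone (f := f ∘ Tuple.sort f) (a := a) (j := t)
    (Tuple.monotone_sort f)).symm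

lemma card_le_eq_countP {n : ℕ} (f : Fin n → ℝ) (a : ℝ) :
    Fintype.card {i : Fin n // f i ≤ a}
      = Multiset.countP (· ≤ a) (Multiset.map f Finset.univ.val) := by
  rw [Fintype.card_subtype, Multiset.countP_map]
  rw [Finset.card_def, Finset.filter_val]

lemma count_eq_of_multiset {n : ℕ} (f g : Fin n → ℝ)
    (hm : Multiset.map f Finset.univ.val = Multiset.map g Finset.univ.val) (a : ℝ) :
    Fintype.card {i : Fin n // f i ≤ a} = Fintype.card {i : Fin n // g i ≤ a} := by
  rw [card_le_eq_countP, card_le_eq_countP, hm]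

lemma kthLargest_eq_of_multiset {n : ℕ} (f g : Fin n → ℝ)
    (hm : Multiset.map f Finset.univ.val = Multiset.map g Finset.univ.val) (k : Fin n) :
    kthLargest f k = kthLargest g k := by
  have hcount := count_eq_of_multiset f g hm
  apply le_antisymm
  · rw [show kthLargest f k = f (Tuple.sort f k.rev) from rfl, sort_le_iff, hcount]
    exact (sort_le_iff g _ k.rev).mp le_rfl
  · rw [show kthLargest g k = g (Tuple.sort g k.rev) from rfl, sort_le_iff, ← hcount]
    exact (sort_le_iff f _ k.rev).mp le_rfl

lemma kthLargest_last_le {L : ℕ} (hL : 0 < L) (f : Fin L → ℝ) (j : Fin L) :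
    kthLargest f ⟨L - 1, by omega⟩ ≤ f j := by
  have hrev : (⟨L - 1, by omega⟩ : Fin L).rev = ⟨0, hL⟩ := by
    ext; simp [Fin.rev]; omega
  unfold kthLargest
  rw [hrev]
  have hmono := Tuple.monotone_sort f
  have h1 : f (Tuple.sort f ⟨0, hL⟩) ≤ (f ∘ Tuple.sort f) ((Tuple.sort f).symm j) :=
    hmono (by exact Fin.mk_le_of_le_val (Nat.zero_le _))
  simpa using h1

lemma kthLargest_padded {n L : ℕ} (hL : 0 < L) (hLn : L ≤ n) (μ : Fin L → ℝ)
    (hμ : ∀ i, 0 < μ i) :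
    kthLargest (fun j : Fin n => if h : j.1 < L then μ ⟨j.1, h⟩ else 0) ⟨L - 1, by omega⟩
      = kthLargest μ ⟨L - 1, by omega⟩ := by
  set d' : Fin n → ℝ := fun j => if h : j.1 < L then μ ⟨j.1, h⟩ else 0 with hd'
  set c : ℝ := kthLargest μ ⟨L - 1, by omega⟩ with hc
  have hc_le : ∀ j, c ≤ μ j := fun j => kthLargest_last_le hL μ j
  have hc_mem : ∃ j₀, c = μ j₀ := ⟨_, rfl⟩
  obtain ⟨j₀, hj₀⟩ := hc_mem
  have hc_pos : 0 < c := hj₀ ▸ hμ j₀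
  have hrev : (⟨L - 1, by omega⟩ : Fin n).rev = ⟨n - L, by omega⟩ := by
    ext; simp [Fin.rev]; omega
  have hiff0 : ∀ j : Fin n, d' j ≤ 0 ↔ ¬ (j.1 < L) := by
    intro j
    by_cases h : j.1 < L
    · simp only [hd', dif_pos h]
      constructor
      · intro hle; exact absurd (lt_of_lt_of_le (hμ _) hle) (lt_irrefl 0)
      · intro hn; exact absurd h hn
    · simp only [hd', dif_neg h]
      simp [h]
  have hcardL : Fintype.card {j : Fin n // j.1 < L} = L := by
    have e : {j : Fin n // j.1 < L} ≃ Fin L :=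
      ⟨fun j => ⟨j.1.1, j.2⟩, fun i => ⟨⟨i.1, lt_of_lt_of_le i.2 hLn⟩, i.2⟩,
        fun j => by ext; rfl, fun i => by ext; rfl⟩
    rw [Fintype.card_congr e, Fintype.card_fin]
  have hcard0 : Fintype.card {j : Fin n // d' j ≤ 0} = n - L := by
    rw [Fintype.card_congr (Equiv.subtypeEquivRight hiff0), Fintype.card_subtype_compl,
      hcardL, Fintype.card_fin]
  -- upper bound
  have hcardc : n - L < Fintype.card {j : Fin n // d' j ≤ c} := by
    rw [← hcard0, Fintype.card_subtype, Fintype.card_subtype]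
    apply Finset.card_lt_card
    constructor
    · intro j hj
      simp only [Finset.mem_filter, Finset.mem_univ, true_and] at hj ⊢
      exact le_trans hj hc_pos.le
    · intro hsub
      set jstar : Fin n := ⟨j₀.1, lt_of_lt_of_le j₀.2 hLn⟩ with hjs
      have hmem : jstar ∈ Finset.univ.filter (fun j => d' j ≤ c) := by
        simp only [Finset.mem_filter, Finset.mem_univ, true_and, hd']
        rw [dif_pos j₀.2]
        simp [hj₀]
        exact le_rfl
      have := hsub hmem
      simp only [Finset.mem_filter, Finset.mem_univ, true_and] at this
      rw [hd'] at this
      simp only [dif_pos j₀.2] at this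
      have : c ≤ 0 := by
        rw [hj₀]
        convert this using 2
        rw [dif_pos (show jstar.1 < L from j₀.2)]
      exact absurd (lt_of_lt_of_le hc_pos this) (lt_irrefl 0)
  have hub : d' (Tuple.sort d' ⟨n - L, by omega⟩) ≤ c :=
    (sort_le_iff d' c ⟨n - L, by omega⟩).mpr hcardc
  have hlb : ¬ d' (Tuple.sort d' ⟨n - L, by omega⟩) ≤ 0 := by
    rw [sort_le_iff, hcard0]
    exact lt_irrefl _
  have hval : ∃ j1 : Fin L, d' (Tuple.sort d' ⟨n - L, by omega⟩) = μ j1 := by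
    set s := Tuple.sort d' ⟨n - L, by omega⟩ with hs
    by_cases h : s.1 < L
    · exact ⟨⟨s.1, h⟩, by rw [hd']; simp [dif_pos h]⟩
    · exfalso; apply hlb; rw [hd']; simp [dif_neg h]
  obtain ⟨j1, hj1⟩ := hval
  unfold kthLargest
  rw [hrev]
  apply le_antisymm hub
  rw [hj1]
  exact hc_le j1

lemma eig_multiset {n : ℕ} {A : Matrix (Fin n) (Fin n) ℂ} (hA : A.IsHermitian)
    (Q : Matrix (Fin n) (Fin n) ℂ) (hQ : Qᴴ * Q = 1) (e : Fin n → ℝ)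
    (hdec : A = Q * Matrix.diagonal (fun i => (e i : ℂ)) * Qᴴ) :
    Multiset.map hA.eigenvalues Finset.univ.val = Multiset.map e Finset.univ.val := by
  have hQ2 : Q * Qᴴ = 1 := mul_eq_one_comm.mp hQ
  set W : Matrix (Fin n) (Fin n) ℂ := (hA.eigenvectorUnitary : Matrix (Fin n) (Fin n) ℂ) with hWdef
  have hWu : W * Wᴴ = 1 := by
    rw [← Matrix.star_eq_conjTranspose]
    exact (Matrix.mem_unitaryGroup_iff).mp hA.eigenvectorUnitary.2
  have h1 : A.charpoly = (Matrix.diagonal (RCLike.ofReal ∘ hA.eigenvalues)).charpoly := by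
    conv_lhs => rw [hA.spectral_theorem]
    rw [Unitary.conjStarAlgAut_apply, Matrix.star_eq_conjTranspose]
    exact my_charpoly_conj W _ Wᴴ hWu
  have h2 : A.charpoly = (Matrix.diagonal (fun i => (e i : ℂ))).charpoly := by
    conv_lhs => rw [hdec]
    exact my_charpoly_conj Q _ Qᴴ hQ2
  have h3 := my_multiset_of_charpoly_eq _ _ (h1.symm.trans h2)
  have h4 : Multiset.map Complex.ofReal (Multiset.map hA.eigenvalues Finset.univ.val)
      = Multiset.map Complex.ofReal (Multiset.map e Finset.univ.val) := by
    rw [Multiset.map_map, Multiset.map_map]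
    exact h3
  exact Multiset.map_injective Complex.ofReal_injective h4

lemma sum_dite_fin {n L : ℕ} (hLn : L ≤ n) (F : Fin L → ℂ) :
    (∑ j : Fin n, if h : j.1 < L then F ⟨j.1, h⟩ else 0) = ∑ i : Fin L, F i := by
  set g : ℕ → ℂ := fun k => if h : k < L then F ⟨k, h⟩ else 0 with hg
  have h1 : (∑ j : Fin n, if h : j.1 < L then F ⟨j.1, h⟩ else 0)
      = ∑ k ∈ Finset.range n, g k := Fin.sum_univ_eq_sum_range g n
  have h2 : (∑ i : Fin L, F i) = ∑ k ∈ Finset.range L, g k := by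
    rw [← Fin.sum_univ_eq_sum_range g L]
    apply Finset.sum_congr rfl
    intro i _
    rw [hg]
    simp only [Fin.is_lt, dif_pos, Fin.eta]
  rw [h1, h2]
  symm
  apply Finset.sum_subset (Finset.range_subset_range.mpr hLn)
  intro k _ hk
  rw [Finset.mem_range, not_lt] at hk
  rw [hg]
  exact dif_neg (by omega)

lemma conj_diag_apply {k n : ℕ} (T : Matrix (Fin n) (Fin k) ℂ) (f : Fin k → ℂ) (r s : Fin n) :
    (T * Matrix.diagonal f * Tᴴ) r s = ∑ j, T r j * f j * (starRingEnd ℂ) (T s j) := by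
  rw [Matrix.mul_apply]
  apply Finset.sum_congr rfl
  intro j _
  rw [Matrix.mul_diagonal, Matrix.conjTranspose_apply]
  rfl

lemma key_reduction {n L : ℕ} (hL : 0 < L) (hLn : L ≤ n)
    (U : Matrix (Fin n) (Fin L) ℂ) (hU : Uᴴ * U = 1)
    (M : Matrix (Fin L) (Fin L) ℂ) (hM : M.IsHermitian)
    (hMpos : ∀ i, 0 < hM.eigenvalues i)
    (A : Matrix (Fin n) (Fin n) ℂ) (hA : A.IsHermitian) (hAeq : A = U * M * Uᴴ) :
    kthLargest hA.eigenvalues ⟨L - 1, by omega⟩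
      = kthLargest hM.eigenvalues ⟨L - 1, by omega⟩ := by
  set μ : Fin L → ℝ := hM.eigenvalues with hμdef
  set W : Matrix (Fin L) (Fin L) ℂ := (hM.eigenvectorUnitary : Matrix (Fin L) (Fin L) ℂ) with hWdef
  set T : Matrix (Fin n) (Fin L) ℂ := U * W with hTdef
  have hWu : Wᴴ * W = 1 := by
    rw [← Matrix.star_eq_conjTranspose]
    exact (Matrix.mem_unitaryGroup_iff').mp hM.eigenvectorUnitary.2
  have hT : Tᴴ * T = 1 := by
    rw [hTdef, Matrix.conjTranspose_mul, Matrix.mul_assoc, ← Matrix.mul_assoc Uᴴ U W, hU,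
      Matrix.one_mul, hWu]
  have hAT : A = T * Matrix.diagonal (fun i => (μ i : ℂ)) * Tᴴ := by
    rw [hAeq]
    conv_lhs => rw [hM.spectral_theorem]
    rw [Unitary.conjStarAlgAut_apply, Matrix.star_eq_conjTranspose, hTdef, Matrix.conjTranspose_mul]
    simp only [Matrix.mul_assoc]
    rfl
  -- orthonormal extension of the columns of T
  set v : Fin n → EuclideanSpace ℂ (Fin n) := fun i =>
    if h : i.1 < L then (WithLp.toLp 2 (fun r => T r ⟨i.1, h⟩) : EuclideanSpace ℂ (Fin n)) else 0
    with hvdef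
  set s : Set (Fin n) := {i | i.1 < L} with hsdef
  have horth : Orthonormal ℂ (s.restrict v) := by
    rw [orthonormal_iff_ite]
    intro i j
    have hi : (i : Fin n).1 < L := i.2
    have hj : (j : Fin n).1 < L := j.2
    simp only [Set.restrict, Set.domRestrict_apply, hvdef, dif_pos hi, dif_pos hj]
    rw [PiLp.inner_apply]
    have : (∑ r, inner ℂ ((WithLp.toLp 2 (fun r => T r ⟨(i : Fin n).1, hi⟩) : EuclideanSpace ℂ (Fin n)) r)
        ((WithLp.toLp 2 (fun r => T r ⟨(j : Fin n).1, hj⟩) : EuclideanSpace ℂ (Fin n)) r) : ℂ)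
        = (Tᴴ * T) ⟨(i : Fin n).1, hi⟩ ⟨(j : Fin n).1, hj⟩ := by
      rw [Matrix.mul_apply]
      apply Finset.sum_congr rfl
      intro r _
      rw [RCLike.inner_apply, Matrix.conjTranspose_apply]
      rw [mul_comm]
      rfl
    rw [this, hT, Matrix.one_apply]
    by_cases h : i = j
    · subst h; simp
    · have : (⟨(i : Fin n).1, hi⟩ : Fin L) ≠ ⟨(j : Fin n).1, hj⟩ := by
        intro hc
        apply h
        rw [Fin.mk.injEq] at hc
        exact Subtype.ext (Fin.ext hc)
      rw [if_neg this, if_neg h]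
  obtain ⟨b, hb⟩ := horth.exists_orthonormalBasis_extension_of_card_eq
    (by simp [finrank_euclideanSpace])
  set Qm : Matrix (Fin n) (Fin n) ℂ := Matrix.of (fun r j => b j r) with hQmdef
  have hQm : Qmᴴ * Qm = 1 := by
    ext i j
    rw [Matrix.mul_apply, Matrix.one_apply]
    have : (∑ r, (Qmᴴ) i r * Qm r j) = (inner ℂ (b i) (b j) : ℂ) := by
      rw [PiLp.inner_apply]
      apply Finset.sum_congr rfl
      intro r _
      rw [Matrix.conjTranspose_apply, RCLike.inner_apply]
      rw [mul_comm]
      rfl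
    rw [this, orthonormal_iff_ite.mp b.orthonormal i j]
  set d' : Fin n → ℝ := fun j => if h : j.1 < L then μ ⟨j.1, h⟩ else 0 with hd'def
  have hdec : A = Qm * Matrix.diagonal (fun j => (d' j : ℂ)) * Qmᴴ := by
    rw [hAT]
    ext r t
    rw [conj_diag_apply, conj_diag_apply]
    have hterm : ∀ j : Fin n, Qm r j * ((d' j : ℝ) : ℂ) * (starRingEnd ℂ) (Qm t j)
        = if h : j.1 < L then T r ⟨j.1, h⟩ * ((μ ⟨j.1, h⟩ : ℝ) : ℂ)
            * (starRingEnd ℂ) (T t ⟨j.1, h⟩) else 0 := by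
      intro j
      by_cases h : j.1 < L
      · rw [dif_pos h]
        have hbj : b j = v j := hb j h
        have hdj : d' j = μ ⟨j.1, h⟩ := by rw [hd'def]; exact dif_pos h
        have hQr : Qm r j = T r ⟨j.1, h⟩ := by
          show b j r = _
          rw [hbj, hvdef]
          simp only [dif_pos h]
        have hQt : Qm t j = T t ⟨j.1, h⟩ := by
          show b j t = _
          rw [hbj, hvdef]
          simp only [dif_pos h]
        rw [hQr, hQt, hdj]
      · rw [dif_neg h]
        have : d' j = 0 := by rw [hd'def]; exact dif_neg h
        rw [this]
        simp
    calc (∑ j : Fin L, T r j * ((μ j : ℝ) : ℂ) * (starRingEnd ℂ) (T t j))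
        = ∑ j : Fin n, (if h : j.1 < L then T r ⟨j.1, h⟩ * ((μ ⟨j.1, h⟩ : ℝ) : ℂ)
            * (starRingEnd ℂ) (T t ⟨j.1, h⟩) else 0) :=
          (sum_dite_fin hLn (fun i => T r i * ((μ i : ℝ) : ℂ) * (starRingEnd ℂ) (T t i))).symm
      _ = ∑ j : Fin n, Qm r j * ((d' j : ℝ) : ℂ) * (starRingEnd ℂ) (Qm t j) :=
          Finset.sum_congr rfl (fun j _ => (hterm j).symm)
  have hms := eig_multiset hA Qm hQm d' hdec
  have h1 := kthLargest_eq_of_multiset _ _ hms (⟨L - 1, by omega⟩ : Fin n)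
  rw [h1]
  exact kthLargest_padded hL hLn μ hMpos

lemma eigen_quadform {L : ℕ} {M : Matrix (Fin L) (Fin L) ℂ} (hM : M.IsHermitian) (i : Fin L) :
    ∃ w : Fin L → ℂ, (∑ r, Complex.normSq (w r)) = 1 ∧
      ((hM.eigenvalues i : ℝ) : ℂ) = dotProduct (star w) (M *ᵥ w) := by
  set w : Fin L → ℂ := (WithLp.equiv 2 (Fin L → ℂ)) (hM.eigenvectorBasis i) with hw
  have hinner : (∑ r, (starRingEnd ℂ) (w r) * w r) = 1 := by
    have h1 := orthonormal_iff_ite.mp hM.eigenvectorBasis.orthonormal i i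
    rw [if_pos rfl, PiLp.inner_apply] at h1
    simp only [RCLike.inner_apply] at h1
    rw [← h1]; exact Finset.sum_congr rfl fun r _ => mul_comm _ _
  have hnormsq : (∑ r, Complex.normSq (w r)) = 1 := by
    have : ((∑ r, Complex.normSq (w r) : ℝ) : ℂ) = 1 := by
      rw [Complex.ofReal_sum]
      rw [← hinner]
      apply Finset.sum_congr rfl
      intro r _
      rw [← Complex.mul_conj]
      ring
    exact_mod_cast this
  refine ⟨w, hnormsq, ?_⟩
  have hv := hM.mulVec_eigenvectorBasis i
  rw [show M *ᵥ w = hM.eigenvalues i • w from hv]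
  have : dotProduct (star w) (hM.eigenvalues i • w)
      = (hM.eigenvalues i : ℂ) * ∑ r, (starRingEnd ℂ) (w r) * w r := by
    simp only [dotProduct, Pi.smul_apply, Pi.star_apply, Complex.real_smul,
      Finset.mul_sum]
    apply Finset.sum_congr rfl
    intro r _
    rw [show star (w r) = (starRingEnd ℂ) (w r) from rfl]
    ring
  rw [this, hinner, mul_one]

lemma kth_le_diag {L : ℕ} (hL : 0 < L) {M : Matrix (Fin L) (Fin L) ℂ} (hM : M.IsHermitian)
    (l : Fin L) :
    kthLargest hM.eigenvalues ⟨L - 1, by omega⟩ ≤ (M l l).re := by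
  set W : Matrix (Fin L) (Fin L) ℂ := (hM.eigenvectorUnitary : Matrix (Fin L) (Fin L) ℂ)
    with hWdef
  have hWu : W * Wᴴ = 1 := by
    rw [← Matrix.star_eq_conjTranspose]
    exact (Matrix.mem_unitaryGroup_iff).mp hM.eigenvectorUnitary.2
  have hMll : M l l = ∑ i, W l i * ((hM.eigenvalues i : ℝ) : ℂ) * (starRingEnd ℂ) (W l i) := by
    conv_lhs => rw [hM.spectral_theorem]
    rw [Unitary.conjStarAlgAut_apply, Matrix.star_eq_conjTranspose]
    exact conj_diag_apply W _ l l
  have hsum1 : (∑ i, Complex.normSq (W l i)) = 1 := by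
    have h1 : (W * Wᴴ) l l = 1 := by rw [hWu]; simp
    rw [Matrix.mul_apply] at h1
    have : ((∑ i, Complex.normSq (W l i) : ℝ) : ℂ) = 1 := by
      rw [Complex.ofReal_sum, ← h1]
      apply Finset.sum_congr rfl
      intro r _
      rw [Matrix.conjTranspose_apply, ← Complex.mul_conj]
      rfl
    exact_mod_cast this
  have hre : (M l l).re = ∑ i, hM.eigenvalues i * Complex.normSq (W l i) := by
    have : M l l = ((∑ i, hM.eigenvalues i * Complex.normSq (W l i) : ℝ) : ℂ) := by
      rw [hMll, Complex.ofReal_sum]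
      apply Finset.sum_congr rfl
      intro r _
      rw [Complex.ofReal_mul]
      rw [show W l r * ((hM.eigenvalues r : ℝ) : ℂ) * (starRingEnd ℂ) (W l r)
          = ((hM.eigenvalues r : ℝ) : ℂ) * (W l r * (starRingEnd ℂ) (W l r)) by ring,
        Complex.mul_conj]
    rw [this, Complex.ofReal_re]
  rw [hre]
  calc kthLargest hM.eigenvalues ⟨L - 1, by omega⟩
      = kthLargest hM.eigenvalues ⟨L - 1, by omega⟩ * ∑ i, Complex.normSq (W l i) := by
        rw [hsum1, mul_one]
    _ = ∑ i, kthLargest hM.eigenvalues ⟨L - 1, by omega⟩ * Complex.normSq (W l i) := by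
        rw [Finset.mul_sum]
    _ ≤ ∑ i, hM.eigenvalues i * Complex.normSq (W l i) := by
        apply Finset.sum_le_sum
        intro i _
        exact mul_le_mul_of_nonneg_right (kthLargest_last_le hL _ i) (Complex.normSq_nonneg _)

lemma outer_conj {n L : ℕ} (U : Matrix (Fin n) (Fin L) ℂ) (a : Fin L → ℂ) :
    U * Matrix.of (fun p q => a p * (starRingEnd ℂ) (a q)) * Uᴴ
      = Matrix.of (fun i j => (U *ᵥ a) i * (starRingEnd ℂ) ((U *ᵥ a) j)) := by
  ext i j
  simp only [Matrix.mul_apply, Matrix.conjTranspose_apply, Matrix.of_apply, Matrix.mulVec,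
    dotProduct, map_sum, _root_.map_mul, Finset.sum_mul, Finset.mul_sum]
  apply Finset.sum_congr rfl
  intro p _
  apply Finset.sum_congr rfl
  intro q _
  rw [show star (U j p) = (starRingEnd ℂ) (U j p) from rfl]
  ring

lemma kthLargest_sq_sigma {L : ℕ} (hL : 0 < L) (σ : Fin L → ℝ)
    (hσpos : ∀ i, 0 < σ i) (hσdec : ∀ i j : Fin L, i ≤ j → σ j ≤ σ i) :
    kthLargest (fun i => σ i * σ i) ⟨L - 1, by omega⟩
      = σ ⟨L - 1, by omega⟩ * σ ⟨L - 1, by omega⟩ := by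
  apply le_antisymm (kthLargest_last_le hL _ _)
  have hval : kthLargest (fun i => σ i * σ i) ⟨L - 1, by omega⟩
      = σ (Tuple.sort (fun i => σ i * σ i) (⟨L - 1, by omega⟩ : Fin L).rev)
        * σ (Tuple.sort (fun i => σ i * σ i) (⟨L - 1, by omega⟩ : Fin L).rev) := rfl
  rw [hval]
  set j₀ := Tuple.sort (fun i => σ i * σ i) (⟨L - 1, by omega⟩ : Fin L).rev
  have hle : j₀ ≤ (⟨L - 1, by omega⟩ : Fin L) := by
    rw [Fin.le_def]
    show j₀.1 ≤ L - 1
    have := j₀.2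
    omega
  have h1 : σ ⟨L - 1, by omega⟩ ≤ σ j₀ := hσdec j₀ ⟨L - 1, by omega⟩ hle
  exact mul_le_mul h1 h1 (hσpos _).le (hσpos _).le

/-- Appending to a rank-`L` matrix `H_S = U Σ V*` a column `h = U a` lying in its column
space increases the squared `L`-th largest singular value by at most `|a_L|²`. -/
theorem sigmaL_sq_increase_bound
    {Nr m L : ℕ} (hL : 0 < L) (hLNr : L ≤ Nr)
    (HS : Matrix (Fin Nr) (Fin m) ℂ) (hrank : HS.rank = L)
    (U : Matrix (Fin Nr) (Fin L) ℂ) (V : Matrix (Fin m) (Fin L) ℂ) (σ : Fin L → ℝ)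
    (hU : Uᴴ * U = 1) (hV : Vᴴ * V = 1)
    (hσpos : ∀ i, 0 < σ i) (hσdec : ∀ i j : Fin L, i ≤ j → σ j ≤ σ i)
    (hSVD : HS = U * Matrix.diagonal (fun i => (σ i : ℂ)) * Vᴴ)
    (h : Fin Nr → ℂ) (a : Fin L → ℂ)
    (ha : a = Uᴴ *ᵥ h) (hcol : h = U *ᵥ a)
    (Htilde : Matrix (Fin Nr) (Fin (m + 1)) ℂ)
    (hHt : Htilde = Matrix.of fun i => Fin.snoc (HS i) (h i)) :
    0 ≤ kthSingularValueSq Htilde ⟨L - 1, by omega⟩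
          - kthSingularValueSq HS ⟨L - 1, by omega⟩ ∧
      kthSingularValueSq Htilde ⟨L - 1, by omega⟩
          - kthSingularValueSq HS ⟨L - 1, by omega⟩
        ≤ ‖a ⟨L - 1, by omega⟩‖ ^ 2 := by
  have hlfin : L - 1 < L := by omega
  set l : Fin L := ⟨L - 1, hlfin⟩ with hldef
  set M₁ : Matrix (Fin L) (Fin L) ℂ := Matrix.diagonal (fun i => ((σ i * σ i : ℝ) : ℂ))
    with hM₁def
  set Ma : Matrix (Fin L) (Fin L) ℂ := Matrix.of (fun p q => a p * (starRingEnd ℂ) (a q))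
    with hMadef
  set M₂ : Matrix (Fin L) (Fin L) ℂ := M₁ + Ma with hM₂def
  have hM₁ : M₁.IsHermitian := by
    rw [hM₁def]
    exact Matrix.isHermitian_diagonal_iff.mpr (fun i => Complex.conj_ofReal _)
  have hMa : Ma.IsHermitian := by
    rw [Matrix.IsHermitian]
    ext p q
    rw [Matrix.conjTranspose_apply, hMadef, Matrix.of_apply, Matrix.of_apply]
    rw [show star (a q * (starRingEnd ℂ) (a p)) = (starRingEnd ℂ) (a q * (starRingEnd ℂ) (a p))
      from rfl]
    rw [_root_.map_mul]
    simp [mul_comm]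
  have hM₂ : M₂.IsHermitian := hM₁.add hMa
  -- identity for HS * HSᴴ
  have hDstar : (Matrix.diagonal (fun i => (σ i : ℂ)))ᴴ = Matrix.diagonal (fun i => (σ i : ℂ)) :=
    Matrix.isHermitian_diagonal_iff.mpr (fun i => Complex.conj_ofReal _)
  have hHSH : HS * HSᴴ = U * M₁ * Uᴴ := by
    rw [hSVD, Matrix.conjTranspose_mul, Matrix.conjTranspose_mul, hDstar,
      Matrix.conjTranspose_conjTranspose]
    calc U * Matrix.diagonal (fun i => (σ i : ℂ)) * Vᴴ
          * (V * (Matrix.diagonal (fun i => (σ i : ℂ)) * Uᴴ))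
        = U * Matrix.diagonal (fun i => (σ i : ℂ)) * (Vᴴ * V)
          * (Matrix.diagonal (fun i => (σ i : ℂ)) * Uᴴ) := by
          simp only [Matrix.mul_assoc]
      _ = U * (Matrix.diagonal (fun i => (σ i : ℂ)) * Matrix.diagonal (fun i => (σ i : ℂ))) * Uᴴ := by
          rw [hV, Matrix.mul_one]
          simp only [Matrix.mul_assoc]
      _ = U * M₁ * Uᴴ := by
          rw [Matrix.diagonal_mul_diagonal, hM₁def]
          congr 2
          funext i
          push_cast
          ring
  -- identity for Htilde * Htildeᴴ
  have hHtH : Htilde * Htildeᴴ = U * M₂ * Uᴴ := by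
    have h1 : Htilde * Htildeᴴ = HS * HSᴴ + Matrix.of (fun i j => h i * (starRingEnd ℂ) (h j)) := by
      ext i j
      rw [Matrix.add_apply, Matrix.mul_apply, Matrix.mul_apply, Matrix.of_apply]
      rw [Fin.sum_univ_castSucc]
      congr 1
      · apply Finset.sum_congr rfl
        intro k _
        rw [Matrix.conjTranspose_apply, Matrix.conjTranspose_apply, hHt]
        show (Fin.snoc (HS i) (h i) : Fin (m+1) → ℂ) k.castSucc
          * star ((Fin.snoc (HS j) (h j) : Fin (m+1) → ℂ) k.castSucc) = _
        rw [Fin.snoc_castSucc, Fin.snoc_castSucc]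
      · rw [Matrix.conjTranspose_apply, hHt]
        show (Fin.snoc (HS i) (h i) : Fin (m+1) → ℂ) (Fin.last m)
          * star ((Fin.snoc (HS j) (h j) : Fin (m+1) → ℂ) (Fin.last m)) = _
        rw [Fin.snoc_last, Fin.snoc_last]
        rfl
    rw [h1, hHSH, hM₂def, Matrix.mul_add, Matrix.add_mul]
    congr 1
    rw [hcol, hMadef]
    exact (outer_conj U a).symm
  -- eigenvalues of M₁
  have hmsM₁ : Multiset.map hM₁.eigenvalues Finset.univ.val
      = Multiset.map (fun i => σ i * σ i) Finset.univ.val := by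
    apply eig_multiset hM₁ 1 (by simp) (fun i => σ i * σ i)
    simp [hM₁def]
  have hM₁pos : ∀ i, 0 < hM₁.eigenvalues i := by
    intro i
    have hmem : hM₁.eigenvalues i ∈ Multiset.map (fun i => σ i * σ i) Finset.univ.val := by
      rw [← hmsM₁]
      exact Multiset.mem_map_of_mem _ (Finset.mem_univ_val i)
    obtain ⟨j, _, hj⟩ := Multiset.mem_map.mp hmem
    rw [← hj]
    exact mul_pos (hσpos j) (hσpos j)
  have hkHS : kthSingularValueSq HS ⟨L - 1, by omega⟩ = σ l * σ l := by
    show kthLargest (Matrix.isHermitian_mul_conjTranspose_self HS).eigenvalues _ = _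
    rw [key_reduction hL hLNr U hU M₁ hM₁ hM₁pos _
      (Matrix.isHermitian_mul_conjTranspose_self HS) hHSH]
    rw [kthLargest_eq_of_multiset _ _ hmsM₁]
    exact kthLargest_sq_sigma hL σ hσpos hσdec
  -- lower bound for eigenvalues of M₂
  have hσl_le : ∀ r : Fin L, σ l ≤ σ r := by
    intro r
    apply hσdec r l
    rw [Fin.le_def]
    show r.1 ≤ L - 1
    have := r.2
    omega
  have hM₂low : ∀ i, σ l * σ l ≤ hM₂.eigenvalues i := by
    intro i
    obtain ⟨w, hw1, hwq⟩ := eigen_quadform hM₂ i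
    set z : ℂ := ∑ q, (starRingEnd ℂ) (a q) * w q with hz
    have hA1 : dotProduct (star w) (M₁ *ᵥ w)
        = ((∑ r, (σ r * σ r) * Complex.normSq (w r) : ℝ) : ℂ) := by
      rw [Complex.ofReal_sum]
      simp only [dotProduct, hM₁def, Matrix.mulVec_diagonal, Pi.star_apply]
      apply Finset.sum_congr rfl
      intro r _
      push_cast
      rw [show star (w r) = (starRingEnd ℂ) (w r) from rfl, ← Complex.mul_conj]
      ring
    have hB1 : dotProduct (star w) (Ma *ᵥ w) = ((Complex.normSq z : ℝ) : ℂ) := by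
      calc dotProduct (star w) (Ma *ᵥ w)
          = ∑ p, (star (w p) * a p) * ∑ q, (starRingEnd ℂ) (a q) * w q := by
            simp only [dotProduct, Matrix.mulVec, hMadef, Matrix.of_apply,
              Pi.star_apply]
            apply Finset.sum_congr rfl
            intro p _
            rw [Finset.mul_sum, Finset.mul_sum]
            apply Finset.sum_congr rfl
            intro q _
            ring
        _ = (∑ p, star (w p) * a p) * z := by rw [← Finset.sum_mul, hz]
        _ = (starRingEnd ℂ) z * z := by
            congr 1
            rw [hz, map_sum]
            apply Finset.sum_congr rfl
            intro q _
            rw [_root_.map_mul, Complex.conj_conj,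
              show star (w q) = (starRingEnd ℂ) (w q) from rfl]
            ring
        _ = ((Complex.normSq z : ℝ) : ℂ) := by rw [← Complex.mul_conj]; ring
    have heq : hM₂.eigenvalues i
        = ∑ r, (σ r * σ r) * Complex.normSq (w r) + Complex.normSq z := by
      have hc : ((hM₂.eigenvalues i : ℝ) : ℂ)
          = ((∑ r, (σ r * σ r) * Complex.normSq (w r) + Complex.normSq z : ℝ) : ℂ) := by
        rw [hwq, hM₂def, Matrix.add_mulVec, dotProduct_add, hA1, hB1,
          Complex.ofReal_add]
      exact_mod_cast hc
    rw [heq]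
    calc σ l * σ l = ∑ r, (σ l * σ l) * Complex.normSq (w r) := by
          rw [← Finset.mul_sum, hw1, mul_one]
      _ ≤ ∑ r, (σ r * σ r) * Complex.normSq (w r) := by
          apply Finset.sum_le_sum
          intro r _
          exact mul_le_mul_of_nonneg_right
            (mul_le_mul (hσl_le r) (hσl_le r) (hσpos l).le (hσpos r).le)
            (Complex.normSq_nonneg _)
      _ ≤ ∑ r, (σ r * σ r) * Complex.normSq (w r) + Complex.normSq z :=
          le_add_of_nonneg_right (Complex.normSq_nonneg z)
  have hM₂pos : ∀ i, 0 < hM₂.eigenvalues i :=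
    fun i => lt_of_lt_of_le (mul_pos (hσpos l) (hσpos l)) (hM₂low i)
  have hkHt : kthSingularValueSq Htilde ⟨L - 1, by omega⟩
      = kthLargest hM₂.eigenvalues ⟨L - 1, by omega⟩ := by
    show kthLargest (Matrix.isHermitian_mul_conjTranspose_self Htilde).eigenvalues _ = _
    exact key_reduction hL hLNr U hU M₂ hM₂ hM₂pos _
      (Matrix.isHermitian_mul_conjTranspose_self Htilde) hHtH
  have hlow : σ l * σ l ≤ kthLargest hM₂.eigenvalues ⟨L - 1, by omega⟩ := hM₂low _
  have hup : kthLargest hM₂.eigenvalues ⟨L - 1, by omega⟩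
      ≤ σ l * σ l + Complex.normSq (a l) := by
    have hd := kth_le_diag hL hM₂ l
    have hentry : (M₂ l l).re = σ l * σ l + Complex.normSq (a l) := by
      rw [hM₂def, Matrix.add_apply, hM₁def, Matrix.diagonal_apply_eq, hMadef, Matrix.of_apply,
        Complex.mul_conj]
      simp
    rw [← hentry]
    exact hd
  have habs : ‖a ⟨L - 1, by omega⟩‖ ^ 2 = Complex.normSq (a l) := by
    rw [Complex.sq_norm]
  constructor
  · rw [hkHt, hkHS]
    linarith
  · rw [hkHt, hkHS, habs]
    linarith
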